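/- Let k ≥ 2 and consider the graph of Proposition on MMS non-existence: k guard agents forming a clique and k+1 standard agents each adjacent to all guards, with binary utilities. The balanced k-partition with parts π_j = {a_j, i_j} for j ∈ [2,k] and π₁ = {a₁, i₁, i_{k+1}} (each part containing exactly one guard) is EF1. -/

import Mathlib

open Finset

variable {V : Type*} [Fintype V] [DecidableEq V]

/-- The `i`-th part of the `k`-partition given by `π`. -/
def cell {k : ℕ} (π : V → Fin k) (i : Fin k) : Finset V :=
  Finset.univ.filter fun v => π v = i

/-- A `k`-partition is balanced if every part has size `⌊n/k⌋` or `⌈n/k⌉`. -/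
def IsBalanced {k : ℕ} (π : V → Fin k) : Prop :=
  ∀ i : Fin k, Fintype.card V / k ≤ (cell π i).card ∧
    (cell π i).card ≤ (Fintype.card V + k - 1) / k

/-- Binary utility: the number of friends (neighbors) of `a` in `S`. -/
def butil (G : SimpleGraph V) [DecidableRel G.Adj] (a : V) (S : Finset V) : ℕ :=
  (S.filter fun b => G.Adj a b).card

/-- The maximin share of agent `a`: the largest `m` such that some balanced
`k`-partition gives `a` at least `m` friends in every part. -/
noncomputable def mmsShare (G : SimpleGraph V) [DecidableRel G.Adj] (k : ℕ) (a : V) : ℕ :=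
  sSup {m : ℕ | ∃ π : V → Fin k, IsBalanced π ∧ ∀ i : Fin k, m ≤ butil G a (cell π i)}

/-- Guards are the first `k` vertices (forming a clique); standards are the remaining
`k+1` vertices (an independent set); every guard is adjacent to every standard. -/
def guardGraph (k : ℕ) : SimpleGraph (Fin (2 * k + 1)) where
  Adj u v := u ≠ v ∧ (u.val < k ∨ v.val < k)
  symm := ⟨fun u v h => ⟨h.1.symm, h.2.symm⟩⟩
  loopless := ⟨fun u h => h.1 rfl⟩

instance (k : ℕ) : DecidableRel (guardGraph k).Adj :=
  fun u v => inferInstanceAs (Decidable (u ≠ v ∧ (u.val < k ∨ v.val < k)))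

/-- The partition with parts `π_j = {a_j, i_j}` for `j ∈ [2, k]` and
`π₁ = {a₁, i₁, i_{k+1}}`: guard `j` (index `j - 1`) together with standard `j`
(index `k + j - 1`) form part `j - 1`, and the last standard joins part `0`. -/
def guardPartition (k : ℕ) (hk : 0 < k) (v : Fin (2 * k + 1)) : Fin k :=
  if h : v.val < k then ⟨v.val, h⟩
  else if h2 : v.val < 2 * k then ⟨v.val - k, by omega⟩
  else ⟨0, hk⟩

lemma gp_val {k : ℕ} (hk : 0 < k) (v : Fin (2 * k + 1)) :
    (guardPartition k hk v).val =
      if v.val < k then v.val else if v.val < 2 * k then v.val - k else 0 := by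
  unfold guardPartition
  split_ifs <;> rfl

lemma mem_gcell {k : ℕ} (hk : 0 < k) (v : Fin (2 * k + 1)) (i : Fin k) :
    v ∈ cell (guardPartition k hk) i ↔ (guardPartition k hk v).val = i.val := by
  simp [cell, Fin.ext_iff]

lemma gcell_card {k : ℕ} (hk : 0 < k) (i : Fin k) :
    2 ≤ (cell (guardPartition k hk) i).card ∧ (cell (guardPartition k hk) i).card ≤ 3 := by
  have hi := i.isLt
  constructor
  · have hsub : ({⟨i.val, by omega⟩, ⟨k + i.val, by omega⟩} : Finset (Fin (2 * k + 1)))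
        ⊆ cell (guardPartition k hk) i := by
      intro v hv
      simp only [mem_insert, mem_singleton] at hv
      rw [mem_gcell, gp_val]
      rcases hv with rfl | rfl <;> simp only <;> split_ifs <;> omega
    have h2 : ({⟨i.val, by omega⟩, ⟨k + i.val, by omega⟩} : Finset (Fin (2 * k + 1))).card = 2 := by
      rw [card_insert_of_notMem, card_singleton]
      simp only [mem_singleton, Fin.ext_iff]
      omega
    calc 2 = _ := h2.symm
      _ ≤ _ := card_le_card hsub
  · have hsub : cell (guardPartition k hk) i ⊆
        ({⟨i.val, by omega⟩, ⟨k + i.val, by omega⟩, ⟨2 * k, by omega⟩} :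
          Finset (Fin (2 * k + 1))) := by
      intro v hv
      rw [mem_gcell, gp_val] at hv
      simp only [mem_insert, mem_singleton, Fin.ext_iff]
      split_ifs at hv <;> omega
    calc (cell (guardPartition k hk) i).card ≤ _ := card_le_card hsub
      _ ≤ 3 := by
        apply le_trans (card_insert_le _ _)
        have := card_insert_le (⟨k + i.val, by omega⟩ : Fin (2 * k + 1)) {⟨2 * k, by omega⟩}
        simp at this ⊢
        omega

lemma own_util {k : ℕ} (hk : 0 < k) (a : Fin (2 * k + 1)) :
    1 ≤ butil (guardGraph k) a
      (cell (guardPartition k hk) (guardPartition k hk a)) := by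
  set j := guardPartition k hk a with hj
  have hjv := j.isLt
  have hav : (guardPartition k hk a).val =
      if a.val < k then a.val else if a.val < 2 * k then a.val - k else 0 := gp_val hk a
  by_cases hcase : a.val < k
  · -- witness: standard partner
    have hw : (⟨k + j.val, by omega⟩ : Fin (2 * k + 1)) ∈
        (cell (guardPartition k hk) j).filter (fun b => (guardGraph k).Adj a b) := by
      rw [mem_filter, mem_gcell, gp_val]
      refine ⟨by simp only; split_ifs <;> omega, ?_, Or.inl hcase⟩
      simp only [ne_eq, Fin.ext_iff]
      omega
    have : ({(⟨k + j.val, by omega⟩ : Fin (2 * k + 1))} : Finset _) ⊆ _ :=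
      singleton_subset_iff.mpr hw
    calc 1 = ({(⟨k + j.val, by omega⟩ : Fin (2 * k + 1))} : Finset _).card := rfl
      _ ≤ _ := card_le_card this
  · -- witness: the guard of the part
    have hw : (⟨j.val, by omega⟩ : Fin (2 * k + 1)) ∈
        (cell (guardPartition k hk) j).filter (fun b => (guardGraph k).Adj a b) := by
      rw [mem_filter, mem_gcell, gp_val]
      refine ⟨by simp only; split_ifs <;> omega, ?_, Or.inr hjv⟩
      simp only [ne_eq, Fin.ext_iff]
      omega
    have : ({(⟨j.val, by omega⟩ : Fin (2 * k + 1))} : Finset _) ⊆ _ :=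
      singleton_subset_iff.mpr hw
    calc 1 = ({(⟨j.val, by omega⟩ : Fin (2 * k + 1))} : Finset _).card := rfl
      _ ≤ _ := card_le_card this
/-- In the guards/standards instance, the balanced `k`-partition putting exactly one
guard in each part (`π_j = {a_j, i_j}` for `j ≥ 2` and `π₁ = {a₁, i₁, i_{k+1}}`)
is EF1. -/
theorem stmt14 (k : ℕ) (hk : 2 ≤ k) :
    IsBalanced (guardPartition k (by omega)) ∧
      ∀ a b : Fin (2 * k + 1),
        ∃ c ∈ (cell (guardPartition k (by omega)) (guardPartition k (by omega) b)).erase b,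
          butil (guardGraph k) a
              (((cell (guardPartition k (by omega))
                  (guardPartition k (by omega) b)).erase b).erase c) ≤
            butil (guardGraph k) a
              (cell (guardPartition k (by omega)) (guardPartition k (by omega) a)) := by
  have hk0 : 0 < k := by omega
  constructor
  · intro i
    obtain ⟨h2, h3⟩ := gcell_card hk0 i
    have hc : Fintype.card (Fin (2 * k + 1)) = 2 * k + 1 := Fintype.card_fin _
    constructor
    · rw [hc]
      have : (2 * k + 1) / k < 3 := by
        rw [Nat.div_lt_iff_lt_mul hk0]; omega
      omega
    · rw [hc]
      have h3k : 2 * k + 1 + k - 1 = 3 * k := by omega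
      rw [h3k, Nat.mul_div_cancel _ hk0]
      exact le_trans h3 (le_refl 3)
  · intro a b
    set j := guardPartition k hk0 b with hjdef
    have hjv := j.isLt
    -- choose c: the partner of b in its cell
    by_cases hb : b.val < k
    · -- b is a guard; c is the standard partner
      refine ⟨⟨k + j.val, by omega⟩, ?_, ?_⟩
      · rw [mem_erase, mem_gcell]; simp only [gp_val]
        constructor
        · simp only [ne_eq, Fin.ext_iff]; omega
        · split_ifs <;> omega
      · have hbmem : b ∈ cell (guardPartition k hk0) j := by
          rw [mem_gcell]
        have hcmem : (⟨k + j.val, by omega⟩ : Fin (2 * k + 1)) ∈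
            (cell (guardPartition k hk0) j).erase b := by
          rw [mem_erase, mem_gcell]; simp only [gp_val]
          constructor
          · simp only [ne_eq, Fin.ext_iff]; omega
          · split_ifs <;> omega
        calc butil (guardGraph k) a _ ≤ _ := card_filter_le _ _
          _ ≤ 1 := by
            rw [card_erase_of_mem hcmem, card_erase_of_mem hbmem]
            have := (gcell_card hk0 j).2
            omega
          _ ≤ _ := own_util hk0 a
    · -- b is a standard; c is the guard of the cell
      refine ⟨⟨j.val, by omega⟩, ?_, ?_⟩
      · rw [mem_erase, mem_gcell]; simp only [gp_val]
        constructor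
        · simp only [ne_eq, Fin.ext_iff]; omega
        · split_ifs <;> omega
      · have hbmem : b ∈ cell (guardPartition k hk0) j := by
          rw [mem_gcell]
        have hcmem : (⟨j.val, by omega⟩ : Fin (2 * k + 1)) ∈
            (cell (guardPartition k hk0) j).erase b := by
          rw [mem_erase, mem_gcell]; simp only [gp_val]
          constructor
          · simp only [ne_eq, Fin.ext_iff]; omega
          · split_ifs <;> omega
        calc butil (guardGraph k) a _ ≤ _ := card_filter_le _ _
          _ ≤ 1 := by
            rw [card_erase_of_mem hcmem, card_erase_of_mem hbmem]
            have := (gcell_card hk0 j).2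
            omega
          _ ≤ _ := own_util hk0 a
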